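/- Let f, g, f̂, ĝ be probability densities on Ω bounded above by 2D, with ∫|f−f̂| ≤ δ₁ and ∫|g−ĝ| ≤ δ₂, and suppose ∫ fg > 0 and ∫ f̂ĝ > 0. Then the normalized products satisfy ∫ | fg/∫fg − f̂ĝ/∫f̂ĝ | ≤ (2/∫fg) · (2D) · (δ₁ + δ₂). -/

import Mathlib

open MeasureTheory

/-- Pairwise aggregation step: for densities `f, g, f̂, ĝ` bounded by `2D`
with `∫|f−f̂| ≤ δ₁` and `∫|g−ĝ| ≤ δ₂`, the normalized products satisfy
`∫ |fg/∫fg − f̂ĝ/∫f̂ĝ| ≤ (2/∫fg)(2D)(δ₁+δ₂)`. -/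
theorem pairwise_step {α : Type*} [MeasurableSpace α] (μ : Measure α)
    (D δ₁ δ₂ : ℝ) (hD : 0 < D)
    (f g fh gh : α → ℝ)
    (hfm : Measurable f) (hgm : Measurable g)
    (hfhm : Measurable fh) (hghm : Measurable gh)
    (hf0 : ∀ x, 0 ≤ f x) (hg0 : ∀ x, 0 ≤ g x)
    (hfh0 : ∀ x, 0 ≤ fh x) (hgh0 : ∀ x, 0 ≤ gh x)
    (hfD : ∀ x, f x ≤ 2 * D) (hgD : ∀ x, g x ≤ 2 * D)
    (hfhD : ∀ x, fh x ≤ 2 * D) (hghD : ∀ x, gh x ≤ 2 * D)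
    (hf1 : ∫ x, f x ∂μ = 1) (hg1 : ∫ x, g x ∂μ = 1)
    (hfh1 : ∫ x, fh x ∂μ = 1) (hgh1 : ∫ x, gh x ∂μ = 1)
    (h1 : ∫ x, |f x - fh x| ∂μ ≤ δ₁) (h2 : ∫ x, |g x - gh x| ∂μ ≤ δ₂)
    (hfg : 0 < ∫ x, f x * g x ∂μ) (hfgh : 0 < ∫ x, fh x * gh x ∂μ) :
    ∫ x, |f x * g x / (∫ y, f y * g y ∂μ)
        - fh x * gh x / (∫ y, fh y * gh y ∂μ)| ∂μ
      ≤ (2 / ∫ y, f y * g y ∂μ) * (2 * D) * (δ₁ + δ₂) := by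
  set Z := ∫ y, f y * g y ∂μ with hZ
  set W := ∫ y, fh y * gh y ∂μ with hW
  -- integrability
  have hIf : Integrable f μ := by
    by_contra h; rw [integral_undef h] at hf1; norm_num at hf1
  have hIg : Integrable g μ := by
    by_contra h; rw [integral_undef h] at hg1; norm_num at hg1
  have hIfh : Integrable fh μ := by
    by_contra h; rw [integral_undef h] at hfh1; norm_num at hfh1
  have hIgh : Integrable gh μ := by
    by_contra h; rw [integral_undef h] at hgh1; norm_num at hgh1
  have hIfg : Integrable (fun x => f x * g x) μ := by
    refine (hIf.const_mul (2 * D)).mono' ((hfm.mul hgm).aestronglyMeasurable) ?_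
    filter_upwards with x
    rw [Real.norm_eq_abs, abs_of_nonneg (mul_nonneg (hf0 x) (hg0 x))]
    calc f x * g x ≤ f x * (2 * D) := mul_le_mul_of_nonneg_left (hgD x) (hf0 x)
      _ = 2 * D * f x := by ring
  have hIfhgh : Integrable (fun x => fh x * gh x) μ := by
    refine (hIfh.const_mul (2 * D)).mono' ((hfhm.mul hghm).aestronglyMeasurable) ?_
    filter_upwards with x
    rw [Real.norm_eq_abs, abs_of_nonneg (mul_nonneg (hfh0 x) (hgh0 x))]
    calc fh x * gh x ≤ fh x * (2 * D) := mul_le_mul_of_nonneg_left (hghD x) (hfh0 x)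
      _ = 2 * D * fh x := by ring
  have hIdiff : Integrable (fun x => f x * g x - fh x * gh x) μ := hIfg.sub hIfhgh
  have hIabs1 : Integrable (fun x => |f x - fh x|) μ := (hIf.sub hIfh).abs
  have hIabs2 : Integrable (fun x => |g x - gh x|) μ := (hIg.sub hIgh).abs
  set A := ∫ x, |f x * g x - fh x * gh x| ∂μ with hA
  have hA0 : 0 ≤ A := integral_nonneg fun x => abs_nonneg _
  have key : A ≤ 2 * D * (δ₁ + δ₂) := by
    have hpt : ∀ x, |f x * g x - fh x * gh x| ≤
        2 * D * |f x - fh x| + 2 * D * |g x - gh x| := by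
      intro x
      calc |f x * g x - fh x * gh x|
          = |(f x - fh x) * g x + fh x * (g x - gh x)| := by ring_nf
        _ ≤ |(f x - fh x) * g x| + |fh x * (g x - gh x)| := abs_add_le _ _
        _ = |f x - fh x| * g x + fh x * |g x - gh x| := by
            rw [abs_mul, abs_mul, abs_of_nonneg (hg0 x), abs_of_nonneg (hfh0 x)]
        _ ≤ |f x - fh x| * (2 * D) + (2 * D) * |g x - gh x| :=
            add_le_add (mul_le_mul_of_nonneg_left (hgD x) (abs_nonneg _))
              (mul_le_mul_of_nonneg_right (hfhD x) (abs_nonneg _))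
        _ = 2 * D * |f x - fh x| + 2 * D * |g x - gh x| := by ring
    calc A ≤ ∫ x, (2 * D * |f x - fh x| + 2 * D * |g x - gh x|) ∂μ := by
          refine integral_mono hIdiff.abs ?_ hpt
          exact (hIabs1.const_mul _).add (hIabs2.const_mul _)
      _ = 2 * D * ∫ x, |f x - fh x| ∂μ + 2 * D * ∫ x, |g x - gh x| ∂μ := by
          rw [integral_add (hIabs1.const_mul _) (hIabs2.const_mul _),
            integral_const_mul, integral_const_mul]
      _ ≤ 2 * D * (δ₁ + δ₂) := by nlinarith [integral_nonneg (f := fun x => |f x - fh x|) (fun x => abs_nonneg (f x - fh x)) (μ := μ)]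
  have hWZ : |W - Z| ≤ A := by
    have : W - Z = ∫ x, (fh x * gh x - f x * g x) ∂μ := by
      rw [integral_sub hIfhgh hIfg]
    rw [this]
    calc |∫ x, (fh x * gh x - f x * g x) ∂μ| ≤ ∫ x, |fh x * gh x - f x * g x| ∂μ := by
          simpa [Real.norm_eq_abs] using
            norm_integral_le_integral_norm (fun x => fh x * gh x - f x * g x) (μ := μ)
      _ = A := by simp_rw [abs_sub_comm]; exact hA.symm
  -- pointwise main bound
  have hmain : ∀ x, |f x * g x / Z - fh x * gh x / W| ≤
      |f x * g x - fh x * gh x| / Z + fh x * gh x * |1 / Z - 1 / W| := by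
    intro x
    have : f x * g x / Z - fh x * gh x / W
        = (f x * g x - fh x * gh x) / Z + fh x * gh x * (1 / Z - 1 / W) := by
      field_simp
      ring
    rw [this]
    calc |(f x * g x - fh x * gh x) / Z + fh x * gh x * (1 / Z - 1 / W)|
        ≤ |(f x * g x - fh x * gh x) / Z| + |fh x * gh x * (1 / Z - 1 / W)| := abs_add_le _ _
      _ = |f x * g x - fh x * gh x| / Z + fh x * gh x * |1 / Z - 1 / W| := by
          rw [abs_div, abs_of_pos hfg, abs_mul,
            abs_of_nonneg (mul_nonneg (hfh0 x) (hgh0 x))]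
  have hILHS : Integrable (fun x => |f x * g x / Z - fh x * gh x / W|) μ :=
    ((hIfg.div_const Z).sub (hIfhgh.div_const W)).abs
  have hIR1 : Integrable (fun x => |f x * g x - fh x * gh x| / Z) μ := hIdiff.abs.div_const Z
  have hIR2 : Integrable (fun x => fh x * gh x * |1 / Z - 1 / W|) μ := hIfhgh.mul_const _
  calc ∫ x, |f x * g x / Z - fh x * gh x / W| ∂μ
      ≤ ∫ x, (|f x * g x - fh x * gh x| / Z + fh x * gh x * |1 / Z - 1 / W|) ∂μ :=
        integral_mono hILHS (hIR1.add hIR2) hmain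
    _ = A / Z + W * |1 / Z - 1 / W| := by
        rw [integral_add hIR1 hIR2, integral_div, integral_mul_const]
    _ ≤ A / Z + A / Z := by
        have heq : W * |1 / Z - 1 / W| = |W - Z| / Z := by
          rw [show (1:ℝ) / Z - 1 / W = (W - Z) / (Z * W) by field_simp, abs_div,
            abs_of_pos (mul_pos hfg hfgh)]
          field_simp
        rw [heq]
        gcongr
    _ = 2 / Z * A := by ring
    _ ≤ 2 / Z * (2 * D * (δ₁ + δ₂)) := by
        gcongr
    _ = 2 / Z * (2 * D) * (δ₁ + δ₂) := by ring
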